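/- arXiv:1301.4949 — 2 statements merged into one kernel-verified Lean document; each statement's English description precedes it below -/
import Mathlib

section
/- For every nonzero v ∈ V, the image of the A-orbit of v under the moment map equals the intrinsic interior of the convex hull of the weights related to v; that is, m_𝔞(A·v) = {m_𝔞(exp(π(X))v) : X ∈ 𝔞} = int(CH(R(v))). -/
set_option maxHeartbeats 2000000
set_option synthInstance.maxHeartbeats 1000000


open scoped InnerProductSpace
open Finset
open scoped Classical
open Filter

/-- The (restricted) moment map of a linear family of operators `π` on an inner
product space `V`: `m v` is the unique element of `E` with
`⟪m v, X⟫ = ⟪π X v, v⟫ / ‖v‖²` for all `X`. -/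
noncomputable def momentMap {E V : Type*} [NormedAddCommGroup E] [InnerProductSpace ℝ E]
    [FiniteDimensional ℝ E] [NormedAddCommGroup V] [InnerProductSpace ℝ V]
    (π : E →ₗ[ℝ] V →L[ℝ] V) (v : V) : E :=
  (InnerProductSpace.toDual ℝ E).symm <| LinearMap.toContinuousLinearMap
    { toFun := fun X => ⟪(π X) v, v⟫_ℝ / ‖v‖ ^ 2
      map_add' := fun X Y => by
        simp [map_add, ContinuousLinearMap.add_apply, inner_add_left, add_div]
      map_smul' := fun c X => by
        simp [map_smul, ContinuousLinearMap.smul_apply, inner_smul_left, mul_div_assoc] }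

theorem exp_apply_eigen {V : Type*} [NormedAddCommGroup V] [InnerProductSpace ℝ V]
    [CompleteSpace V] (A : V →L[ℝ] V) (u : V) (t : ℝ) (h : A u = t • u) :
    NormedSpace.exp A u = Real.exp t • u := by
  have hpow : ∀ n : ℕ, (A ^ n) u = t ^ n • u := by
    intro n; induction n with
    | zero => simp
    | succ n ih =>
      rw [pow_succ, ContinuousLinearMap.mul_apply, h, map_smul, ih, smul_smul, pow_succ]
      ring_nf
  have h1 : NormedSpace.exp A u = ∑' n : ℕ, ((Nat.factorial n : ℝ)⁻¹ • A ^ n) u := by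
    rw [NormedSpace.exp_eq_tsum ℝ]
    exact ((ContinuousLinearMap.apply ℝ V u).map_tsum
      (NormedSpace.expSeries_summable' (𝕂 := ℝ) A))
  rw [h1]
  have h2 : ∀ n : ℕ, ((Nat.factorial n : ℝ)⁻¹ • A ^ n) u
      = ((Nat.factorial n : ℝ)⁻¹ * t ^ n) • u := by
    intro n; simp [hpow n, smul_smul]
  simp_rw [h2]
  rw [Summable.tsum_smul_const]
  · congr 1
    rw [Real.exp_eq_exp_ℝ, NormedSpace.exp_eq_tsum ℝ]
    simp [smul_eq_mul]
  · exact (Real.summable_pow_div_factorial t).congr (by intro n; rw [div_eq_inv_mul])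

theorem pos_combo_mem_intrinsicInterior {𝔞 : Type*} [NormedAddCommGroup 𝔞]
    [NormedSpace ℝ 𝔞] [FiniteDimensional ℝ 𝔞] (Φ : Finset 𝔞)
    {t : 𝔞 → ℝ} (ht : ∀ α ∈ Φ, 0 < t α) (ht1 : ∑ α ∈ Φ, t α = 1) :
    ∑ α ∈ Φ, t α • α ∈ intrinsicInterior ℝ (convexHull ℝ (Φ : Set 𝔞)) := by
  have hΦ : Φ.Nonempty := by
    rcases Φ.eq_empty_or_nonempty with h | h
    · simp [h] at ht1
    · exact h
  obtain ⟨α₀, hα₀⟩ := hΦ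
  set s : Set 𝔞 := convexHull ℝ (Φ : Set 𝔞) with hs
  set p : 𝔞 := ∑ α ∈ Φ, t α • α with hp
  -- p is in the convex hull
  have hmemCH : ∀ (w : 𝔞 → ℝ), (∀ α ∈ Φ, 0 ≤ w α) → ∑ α ∈ Φ, w α = 1 →
      (∑ α ∈ Φ, w α • α) ∈ s := by
    intro w hw0 hw1
    have := Φ.centerMass_mem_convexHull (w := w) (z := id) hw0 (by rw [hw1]; norm_num)
      (fun i hi => Finset.mem_coe.2 hi)
    rwa [Finset.centerMass_eq_of_sum_1 _ _ hw1] at this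
  have hpCH : p ∈ s := hmemCH t (fun α hα => (ht α hα).le) ht1
  have hpA : p ∈ affineSpan ℝ s := subset_affineSpan ℝ s hpCH
  -- vector span and the right inverse
  set M : Submodule ℝ 𝔞 := vectorSpan ℝ (Φ : Set 𝔞) with hM
  let T : (𝔞 → ℝ) →ₗ[ℝ] 𝔞 :=
    { toFun := fun u => ∑ α ∈ Φ, u α • (α - α₀)
      map_add' := fun u v => by simp [add_smul, Finset.sum_add_distrib]
      map_smul' := fun r u => by simp [smul_smul, Finset.smul_sum]
      }
  have hTmem : ∀ u, T u ∈ M := by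
    intro u
    refine Submodule.sum_mem _ fun α hα => Submodule.smul_mem _ _ ?_
    have := vsub_mem_vectorSpan ℝ (Finset.mem_coe.2 hα) (Finset.mem_coe.2 hα₀)
    rwa [vsub_eq_sub] at this
  let Tc : (𝔞 → ℝ) →ₗ[ℝ] M := T.codRestrict M hTmem
  have hle : M ≤ LinearMap.range T := by
    rw [hM, vectorSpan_eq_span_vsub_set_right ℝ (Finset.mem_coe.2 hα₀)]
    rw [Submodule.span_le]
    rintro x ⟨α, hα, rfl⟩
    refine ⟨fun β => if β = α then 1 else 0, ?_⟩
    have : ∀ β ∈ Φ, (if β = α then (1:ℝ) else 0) • (β - α₀)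
        = if β = α then β - α₀ else 0 := by
      intro β _; split <;> simp
    simp only [T, LinearMap.coe_mk, AddHom.coe_mk]
    rw [Finset.sum_congr rfl this, Finset.sum_ite_eq' Φ α (fun β => β - α₀)]
    simp [Finset.mem_coe.1 hα, vsub_eq_sub]
  have hsurj : LinearMap.range Tc = ⊤ := by
    rw [LinearMap.range_eq_top]
    intro d
    obtain ⟨u, hu⟩ := hle d.2
    exact ⟨u, Subtype.ext hu⟩
  obtain ⟨σ, hσ⟩ := Tc.exists_rightInverse_of_surjective hsurj
  have hTσ : ∀ d : M, T (σ d) = (d : 𝔞) := by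
    intro d
    have := congrArg (fun f => (f d : M)) hσ
    simpa [Tc, LinearMap.codRestrict] using congrArg Subtype.val this
  -- coordinate bounds
  have hbound : ∀ α : 𝔞, ∃ C : ℝ, 0 ≤ C ∧ ∀ d : M, |σ d α| ≤ C * ‖d‖ := by
    intro α
    let f : M →ₗ[ℝ] ℝ := (LinearMap.proj α).comp σ
    let fc := LinearMap.toContinuousLinearMap f
    refine ⟨‖fc‖, fc.opNorm_nonneg, fun d => ?_⟩
    have := fc.le_opNorm d
    simpa [fc, f] using this
  choose C hC0 hC using hbound
  set Cm : ℝ := ∑ α ∈ Φ, C α with hCm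
  have hCm0 : 0 ≤ Cm := Finset.sum_nonneg fun α _ => hC0 α
  have hCle : ∀ α ∈ Φ, C α ≤ Cm := fun α hα =>
    Finset.single_le_sum (fun β _ => hC0 β) hα
  obtain ⟨β₀, hβ₀Φ, hβ₀⟩ := Φ.exists_min_image t ⟨α₀, hα₀⟩
  set tm : ℝ := t β₀ with htm
  have htm0 : 0 < tm := ht β₀ hβ₀Φ
  set n : ℝ := (Φ.card : ℝ) with hn
  have hn0 : (0:ℝ) ≤ n := Nat.cast_nonneg _
  set ε : ℝ := tm / ((n + 1) * Cm + 1) with hε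
  have hden : (0:ℝ) < (n + 1) * Cm + 1 := by positivity
  have hε0 : 0 < ε := div_pos htm0 hden
  rw [mem_intrinsicInterior]
  refine ⟨⟨p, hpA⟩, ?_, rfl⟩
  rw [mem_interior_iff_mem_nhds, Metric.mem_nhds_iff]
  refine ⟨ε, hε0, ?_⟩
  rintro ⟨z, hz⟩ hball
  have hzp : ‖z - p‖ < ε := by
    simpa [Subtype.dist_eq, dist_eq_norm] using hball
  show z ∈ s
  have hdmem : z - p ∈ M := by
    have h1 : z -ᵥ p ∈ (affineSpan ℝ s).direction :=
      AffineSubspace.vsub_mem_direction hz hpA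
    have h2 : (affineSpan ℝ s).direction = M := by
      rw [hs, affineSpan_convexHull, direction_affineSpan, hM]
    rw [h2, vsub_eq_sub] at h1
    exact h1
  set d : M := ⟨z - p, hdmem⟩ with hd
  set u : 𝔞 → ℝ := σ d with hu
  have hTu : ∑ α ∈ Φ, u α • (α - α₀) = z - p := hTσ d
  have hdn : ‖d‖ < ε := by
    rw [hd]
    exact hzp
  -- bounds on u
  have hub : ∀ α ∈ Φ, |u α| ≤ Cm * ‖d‖ := fun α hα =>
    (hC α d).trans (mul_le_mul_of_nonneg_right (hCle α hα) (norm_nonneg _))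
  set S : ℝ := ∑ β ∈ Φ, u β with hS
  have hSb : |S| ≤ n * Cm * ‖d‖ := by
    calc |S| ≤ ∑ β ∈ Φ, |u β| := Finset.abs_sum_le_sum_abs _ _
    _ ≤ ∑ _β ∈ Φ, Cm * ‖d‖ := Finset.sum_le_sum hub
    _ = n * Cm * ‖d‖ := by rw [Finset.sum_const, nsmul_eq_mul, hn]; ring
  -- the new weights
  set w : 𝔞 → ℝ := fun α => t α + u α - (if α = α₀ then S else 0) with hw
  have hw1 : ∑ α ∈ Φ, w α = 1 := by
    rw [hw]
    rw [Finset.sum_sub_distrib, Finset.sum_add_distrib, ht1,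
      Finset.sum_ite_eq' Φ α₀ (fun _ => S), if_pos hα₀, ← hS]
    ring
  have e2 : ∑ α ∈ Φ, u α • (α - α₀) = (∑ α ∈ Φ, u α • α) - S • α₀ := by
    simp only [smul_sub]
    rw [Finset.sum_sub_distrib, ← Finset.sum_smul]
  have hw2 : ∑ α ∈ Φ, w α • α = z := by
    have e3 : ∀ α ∈ Φ, w α • α =
        (t α • α + u α • α) - (if α = α₀ then S • α₀ else 0) := by
      intro α hα
      simp only [hw]
      by_cases h : α = α₀
      · subst h
        rw [if_pos rfl, if_pos rfl, sub_smul, add_smul]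
      · rw [if_neg h, if_neg h, sub_zero, sub_zero, add_smul]
    rw [Finset.sum_congr rfl e3, Finset.sum_sub_distrib, Finset.sum_add_distrib,
      Finset.sum_ite_eq' Φ α₀ (fun _ => S • α₀), if_pos hα₀]
    have e4 : (∑ α ∈ Φ, u α • α) - S • α₀ = z - p := by rw [← e2, hTu]
    rw [← hp, add_sub_assoc, e4]
    abel
  have hwpos : ∀ α ∈ Φ, 0 ≤ w α := by
    intro α hα
    have h1 : tm ≤ t α := hβ₀ α hα
    have h2 : -(Cm * ‖d‖) ≤ u α := neg_le_of_abs_le (hub α hα)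
    have h3 : (if α = α₀ then S else 0) ≤ n * Cm * ‖d‖ := by
      split
      · exact le_of_abs_le hSb
      · exact mul_nonneg (mul_nonneg hn0 hCm0) (norm_nonneg _)
    have h4 : (n + 1) * Cm * ‖d‖ < tm := by
      have hd0 : ‖d‖ < ε := hdn
      have : ((n + 1) * Cm + 1) * ‖d‖ < ((n + 1) * Cm + 1) * ε :=
        mul_lt_mul_of_pos_left hdn hden
      have h5 : ((n + 1) * Cm + 1) * ε = tm := by
        rw [hε, mul_div_cancel₀ _ (ne_of_gt hden)]
      nlinarith [norm_nonneg d]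
    simp only [hw]
    nlinarith [h1, h2, h3, h4, norm_nonneg d]
  rw [← hw2]
  exact hmemCH w hwpos hw1

theorem exists_pos_combo_of_mem_intrinsicInterior {𝔞 : Type*} [NormedAddCommGroup 𝔞]
    [NormedSpace ℝ 𝔞] [FiniteDimensional ℝ 𝔞] (Φ : Finset 𝔞) {p : 𝔞}
    (hp : p ∈ intrinsicInterior ℝ (convexHull ℝ (Φ : Set 𝔞))) :
    ∃ t : 𝔞 → ℝ, (∀ α ∈ Φ, 0 < t α) ∧ ∑ α ∈ Φ, t α = 1 ∧ ∑ α ∈ Φ, t α • α = p := by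
  set s : Set 𝔞 := convexHull ℝ (Φ : Set 𝔞) with hs
  have hps : p ∈ s := intrinsicInterior_subset hp
  have hΦ : Φ.Nonempty := by
    rcases Φ.eq_empty_or_nonempty with h | h
    · rw [hs, h] at hps; simp at hps
    · exact h
  have hn0 : (0:ℝ) < (Φ.card : ℝ) := by
    exact_mod_cast Finset.card_pos.2 hΦ
  set n : ℝ := (Φ.card : ℝ) with hn
  set q : 𝔞 := ∑ α ∈ Φ, (n⁻¹) • α with hq
  have hqs : q ∈ s := by
    have := Φ.centerMass_mem_convexHull (w := fun _ => n⁻¹) (z := id)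
      (fun i _ => by positivity) (by
        rw [Finset.sum_const, nsmul_eq_mul, ← hn, mul_inv_cancel₀ (ne_of_gt hn0)]
        norm_num)
      (fun i hi => Finset.mem_coe.2 hi)
    rwa [Finset.centerMass, Finset.sum_const, nsmul_eq_mul, ← hn,
      mul_inv_cancel₀ (ne_of_gt hn0), inv_one, one_smul] at this
  rw [mem_intrinsicInterior] at hp
  obtain ⟨y, hyint, hyp⟩ := hp
  rw [mem_interior_iff_mem_nhds, Metric.mem_nhds_iff] at hyint
  obtain ⟨ε, hε0, hball⟩ := hyint
  set ε' : ℝ := ε / (2 * (‖p - q‖ + 1)) with hε'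
  have hd0 : (0:ℝ) < 2 * (‖p - q‖ + 1) := by positivity
  have hε'0 : 0 < ε' := div_pos hε0 hd0
  set r : 𝔞 := p + ε' • (p - q) with hr
  have hpA : p ∈ affineSpan ℝ s := subset_affineSpan ℝ s hps
  have hqA : q ∈ affineSpan ℝ s := subset_affineSpan ℝ s hqs
  have hrA : r ∈ affineSpan ℝ s := by
    have h1 : p -ᵥ q ∈ (affineSpan ℝ s).direction :=
      AffineSubspace.vsub_mem_direction hpA hqA
    have h2 : ε' • (p -ᵥ q) ∈ (affineSpan ℝ s).direction :=
      Submodule.smul_mem _ _ h1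
    have := AffineSubspace.vadd_mem_of_mem_direction h2 hpA
    simpa [hr, vsub_eq_sub, vadd_eq_add, add_comm] using this
  have hrs : r ∈ s := by
    have hmem : (⟨r, hrA⟩ : affineSpan ℝ s) ∈ Metric.ball y ε := by
      rw [Metric.mem_ball, Subtype.dist_eq, hyp, dist_eq_norm]
      have h3 : r - p = ε' • (p - q) := by rw [hr]; abel
      rw [h3, norm_smul, Real.norm_eq_abs, abs_of_pos hε'0, hε']
      rcases eq_or_ne (p - q) 0 with h | h
      · simp [h]; positivity
      · have hpq : 0 < ‖p - q‖ := norm_pos_iff.2 h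
        rw [div_mul_eq_mul_div, div_lt_iff₀ hd0]
        nlinarith
    exact hball hmem
  rw [hs, Finset.convexHull_eq] at hrs
  obtain ⟨w, hw0, hw1, hwc⟩ := hrs
  rw [Finset.centerMass_eq_of_sum_1 _ _ hw1] at hwc
  simp only [id] at hwc
  refine ⟨fun α => (w α + ε' / n) / (1 + ε'), ?_, ?_, ?_⟩
  · intro α hα
    have := hw0 α hα
    positivity
  · rw [← Finset.sum_div, Finset.sum_add_distrib, hw1, Finset.sum_const, nsmul_eq_mul,
      ← hn, mul_div_cancel₀ _ (ne_of_gt hn0), div_self (by positivity)]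
  · have e1 : ∀ α ∈ Φ, ((w α + ε' / n) / (1 + ε')) • α
        = (1 + ε')⁻¹ • (w α • α + (ε' * n⁻¹) • α) := by
      intro α _
      rw [div_eq_inv_mul, mul_smul, add_smul, div_eq_mul_inv]
    rw [Finset.sum_congr rfl e1, ← Finset.smul_sum, Finset.sum_add_distrib, hwc]
    have e2 : ∑ α ∈ Φ, (ε' * n⁻¹) • α = ε' • q := by
      rw [hq, Finset.smul_sum]
      exact Finset.sum_congr rfl fun α _ => by rw [smul_smul]
    rw [e2]
    have e3 : r + ε' • q = (1 + ε') • p := by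
      rw [hr, add_smul, one_smul, smul_sub]; abel
    rw [e3, smul_smul, inv_mul_cancel₀ (by positivity), one_smul]

theorem exists_exp_combo {𝔞 : Type*} [NormedAddCommGroup 𝔞] [InnerProductSpace ℝ 𝔞]
    [FiniteDimensional ℝ 𝔞] (R : Finset 𝔞) (hR : R.Nonempty) (b : 𝔞 → ℝ)
    (hb : ∀ α ∈ R, 0 < b α) (p : 𝔞) (t : 𝔞 → ℝ) (ht : ∀ α ∈ R, 0 < t α)
    (ht1 : ∑ α ∈ R, t α = 1) (htp : ∑ α ∈ R, t α • α = p) :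
    ∃ X : 𝔞, ∑ α ∈ R, (b α * Real.exp ⟪α, X⟫_ℝ) • α
      = (∑ α ∈ R, b α * Real.exp ⟪α, X⟫_ℝ) • p := by
  set F : 𝔞 → ℝ := fun X => ∑ α ∈ R, b α * Real.exp ⟪α, X⟫_ℝ with hF
  have hF0 : ∀ X, 0 < F X := fun X =>
    Finset.sum_pos (fun α hα => mul_pos (hb α hα) (Real.exp_pos _)) hR
  set f : 𝔞 → ℝ := fun X => Real.log (F X) - ⟪p, X⟫_ℝ with hf
  -- the average of ⟪α - p, X⟫ is 0
  have havg : ∀ X : 𝔞, ∑ α ∈ R, t α * ⟪α - p, X⟫_ℝ = 0 := by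
    intro X
    have h1 : ∑ α ∈ R, t α * ⟪α, X⟫_ℝ = ⟪p, X⟫_ℝ := by
      rw [← htp, sum_inner]
      exact Finset.sum_congr rfl fun α _ => (real_inner_smul_left _ _ _).symm
    have h2 : ∀ α ∈ R, t α * ⟪α - p, X⟫_ℝ = t α * ⟪α, X⟫_ℝ - t α * ⟪p, X⟫_ℝ := by
      intro α _; rw [inner_sub_left]; ring
    rw [Finset.sum_congr rfl h2, Finset.sum_sub_distrib, h1, ← Finset.sum_mul, ht1,
      one_mul, sub_self]
  -- continuity of f
  have hFc : Continuous F := by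
    refine continuous_finset_sum _ fun α _ => Continuous.mul continuous_const ?_
    exact Real.continuous_exp.comp (continuous_const.inner continuous_id)
  have hfc : Continuous f :=
    (hFc.log fun X => ne_of_gt (hF0 X)).sub (continuous_const.inner continuous_id)
  -- the subspace W
  set W : Submodule ℝ 𝔞 := Submodule.span ℝ ((fun α => α - p) '' (R : Set 𝔞)) with hW
  -- invariance of f under directions orthogonal to W
  have hinv : ∀ Z U : 𝔞, U ∈ Wᗮ → f (Z + U) = f Z := by
    intro Z U hU
    have hαU : ∀ α ∈ R, ⟪α, U⟫_ℝ = ⟪p, U⟫_ℝ := by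
      intro α hα
      have hgen : α - p ∈ W := Submodule.subset_span ⟨α, Finset.mem_coe.2 hα, rfl⟩
      have := (Submodule.mem_orthogonal W U).1 hU _ hgen
      rw [inner_sub_left, sub_eq_zero] at this
      exact this
    have hFZU : F (Z + U) = Real.exp ⟪p, U⟫_ℝ * F Z := by
      rw [hF, Finset.mul_sum]
      refine Finset.sum_congr rfl fun α hα => ?_
      rw [inner_add_right, Real.exp_add, hαU α hα]
      ring
    rw [hf]
    simp only [hFZU, inner_add_right]
    rw [Real.log_mul (ne_of_gt (Real.exp_pos _)) (ne_of_gt (hF0 Z)), Real.log_exp]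
    ring
  -- coercivity constant δ
  have hδ : ∃ δ : ℝ, 0 < δ ∧ ∀ X : W, ∃ α ∈ R, δ * ‖X‖ ≤ ⟪α - p, (X : 𝔞)⟫_ℝ := by
    -- the auxiliary function h
    set h : W → ℝ := fun X => ∑ α ∈ R, t α * max ⟪α - p, (X : 𝔞)⟫_ℝ 0 with hh
    have hhc : Continuous h := by
      refine continuous_finset_sum _ fun α _ => Continuous.mul continuous_const ?_
      exact ((continuous_const.inner continuous_subtype_val)).max continuous_const
    have hhpos : ∀ X : W, X ≠ 0 → 0 < h X := by
      intro X hX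
      have hnn : ∀ α ∈ R, 0 ≤ t α * max ⟪α - p, (X : 𝔞)⟫_ℝ 0 :=
        fun α hα => mul_nonneg (ht α hα).le (le_max_right _ _)
      rcases (Finset.sum_nonneg hnn).lt_or_eq with hlt | heq
      · exact hlt
      · exfalso
        have hzero : ∀ α ∈ R, t α * max ⟪α - p, (X : 𝔞)⟫_ℝ 0 = 0 :=
          (Finset.sum_eq_zero_iff_of_nonneg hnn).1 heq.symm
        have hle : ∀ α ∈ R, ⟪α - p, (X : 𝔞)⟫_ℝ ≤ 0 := by
          intro α hα
          have := hzero α hα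
          have h2 : max ⟪α - p, (X : 𝔞)⟫_ℝ 0 = 0 :=
            (mul_eq_zero.1 this).resolve_left (ne_of_gt (ht α hα))
          exact le_of_max_le_left (le_of_eq h2)
        have heq0 : ∀ α ∈ R, ⟪α - p, (X : 𝔞)⟫_ℝ = 0 := by
          have hnp : ∀ α ∈ R, t α * ⟪α - p, (X : 𝔞)⟫_ℝ ≤ 0 :=
            fun α hα => mul_nonpos_of_nonneg_of_nonpos (ht α hα).le (hle α hα)
          have := (Finset.sum_eq_zero_iff_of_nonpos hnp).1 (havg (X : 𝔞))
          intro α hα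
          exact ((mul_eq_zero.1 (this α hα)).resolve_left (ne_of_gt (ht α hα)))
        -- X is orthogonal to W, hence zero
        set U : Submodule ℝ 𝔞 :=
          LinearMap.ker ((innerSL ℝ (X : 𝔞)).toLinearMap) with hU
        have hWU : W ≤ U := by
          rw [hW, Submodule.span_le]
          rintro x ⟨α, hα, rfl⟩
          show ⟪(X : 𝔞), α - p⟫_ℝ = 0
          rw [real_inner_comm]
          exact heq0 α (Finset.mem_coe.1 hα)
        have hXU : (X : 𝔞) ∈ U := hWU X.2
        have : ⟪(X : 𝔞), (X : 𝔞)⟫_ℝ = 0 := hXU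
        exact hX (Subtype.ext (inner_self_eq_zero.1 this))
    -- get a single index α with large inner product
    have hmax : ∀ X : W, ∃ α ∈ R, (∀ β ∈ R, ⟪β - p, (X : 𝔞)⟫_ℝ ≤ ⟪α - p, (X : 𝔞)⟫_ℝ)
        ∧ h X ≤ ⟪α - p, (X : 𝔞)⟫_ℝ := by
      intro X
      obtain ⟨α, hαR, hα⟩ := R.exists_max_image (fun β => ⟪β - p, (X : 𝔞)⟫_ℝ) hR
      refine ⟨α, hαR, hα, ?_⟩
      have hM0 : 0 ≤ ⟪α - p, (X : 𝔞)⟫_ℝ := by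
        by_contra hneg
        push_neg at hneg
        have : ∑ β ∈ R, t β * ⟪β - p, (X : 𝔞)⟫_ℝ < 0 := by
          have hlt : ∀ β ∈ R, t β * ⟪β - p, (X : 𝔞)⟫_ℝ < 0 := fun β hβ =>
            mul_neg_of_pos_of_neg (ht β hβ) (lt_of_le_of_lt (hα β hβ) hneg)
          exact Finset.sum_neg hlt hR
        rw [havg] at this
        exact lt_irrefl _ this
      calc h X ≤ ∑ β ∈ R, t β * ⟪α - p, (X : 𝔞)⟫_ℝ := by
            refine Finset.sum_le_sum fun β hβ => ?_
            exact mul_le_mul_of_nonneg_left (max_le (hα β hβ) hM0) (ht β hβ).le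
        _ = ⟪α - p, (X : 𝔞)⟫_ℝ := by rw [← Finset.sum_mul, ht1, one_mul]
    rcases isEmpty_or_nonempty (Metric.sphere (0 : W) 1) with hemp | hne
    · refine ⟨1, one_pos, fun X => ?_⟩
      have hX0 : X = 0 := by
        by_contra hX
        have : ‖(‖X‖⁻¹ • X)‖ = 1 := by
          rw [norm_smul, norm_inv, norm_norm,
            inv_mul_cancel₀ (norm_ne_zero_iff.2 hX)]
        exact hemp.false ⟨‖X‖⁻¹ • X, mem_sphere_zero_iff_norm.2 this⟩
      obtain ⟨α, hα⟩ := hR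
      exact ⟨α, hα, by simp [hX0]⟩
    · obtain ⟨X₁, hX₁mem, hX₁min⟩ :=
        (isCompact_sphere (0 : W) 1).exists_isMinOn
          ⟨(Classical.choice hne).1, (Classical.choice hne).2⟩ hhc.continuousOn
      have hX₁norm : ‖X₁‖ = 1 := by
        simpa [Metric.mem_sphere, dist_zero_right] using hX₁mem
      have hX₁ne : X₁ ≠ 0 := fun h => by simp [h] at hX₁norm
      set δ : ℝ := h X₁ with hδdef
      refine ⟨δ, hhpos X₁ hX₁ne, fun X => ?_⟩
      rcases eq_or_ne X 0 with rfl | hX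
      · obtain ⟨α, hα⟩ := hR
        refine ⟨α, hα, ?_⟩
        rw [norm_zero, mul_zero, Submodule.coe_zero, inner_zero_right]
      · set u : W := ‖X‖⁻¹ • X with hu
        have hunorm : ‖u‖ = 1 := by
          rw [hu, norm_smul, norm_inv, norm_norm,
            inv_mul_cancel₀ (norm_ne_zero_iff.2 hX)]
        have humem : u ∈ Metric.sphere (0 : W) 1 := by
          simpa [Metric.mem_sphere, dist_zero_right] using hunorm
        obtain ⟨α, hαR, _, hα2⟩ := hmax u
        refine ⟨α, hαR, ?_⟩
        have h1 : δ ≤ h u := hX₁min humem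
        have h2 : δ ≤ ⟪α - p, (u : 𝔞)⟫_ℝ := h1.trans hα2
        have h3 : (u : 𝔞) = ‖X‖⁻¹ • (X : 𝔞) := rfl
        rw [h3, real_inner_smul_right] at h2
        have h4 : 0 < ‖X‖ := norm_pos_iff.2 hX
        have hc0 : (X : 𝔞) ≠ 0 := fun hxx => hX (Subtype.ext hxx)
        calc δ * ‖X‖ ≤ (‖X‖⁻¹ * ⟪α - p, (X : 𝔞)⟫_ℝ) * ‖X‖ :=
              mul_le_mul_of_nonneg_right h2 h4.le
          _ = ⟪α - p, (X : 𝔞)⟫_ℝ := by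
              field_simp
  obtain ⟨δ, hδ0, hδb⟩ := hδ
  -- lower bound for f on W
  obtain ⟨αb, hαbR, hαb⟩ := R.exists_min_image (fun α => Real.log (b α)) hR
  have hlow : ∀ X : W, Real.log (b αb) + δ * ‖X‖ ≤ f (X : 𝔞) := by
    intro X
    obtain ⟨α, hαR, hα⟩ := hδb X
    have h1 : b α * Real.exp ⟪α, (X : 𝔞)⟫_ℝ ≤ F (X : 𝔞) := by
      refine Finset.single_le_sum (f := fun β => b β * Real.exp ⟪β, (X : 𝔞)⟫_ℝ)
        (fun β hβ => mul_nonneg (hb β hβ).le (Real.exp_pos _).le) hαR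
    have h2 : Real.log (b α) + ⟪α, (X : 𝔞)⟫_ℝ ≤ Real.log (F (X : 𝔞)) := by
      have := Real.log_le_log (mul_pos (hb α hαR) (Real.exp_pos _)) h1
      rwa [Real.log_mul (ne_of_gt (hb α hαR)) (ne_of_gt (Real.exp_pos _)),
        Real.log_exp] at this
    have h3 : Real.log (b αb) + δ * ‖X‖ ≤ Real.log (b α) + ⟪α - p, (X : 𝔞)⟫_ℝ := by
      have := hαb α hαR
      nlinarith
    have h4 : f (X : 𝔞) = Real.log (F (X : 𝔞)) - ⟪p, (X : 𝔞)⟫_ℝ := rfl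
    rw [h4]
    rw [inner_sub_left] at h3
    linarith
  -- the restricted function attains a minimum
  have : Nonempty W := ⟨0⟩
  have hcoer : Tendsto (fun X : W => f (X : 𝔞)) (cocompact W) atTop := by
    refine tendsto_atTop_mono hlow ?_
    have h1 : Tendsto (fun X : W => ‖X‖) (cocompact W) atTop :=
      tendsto_norm_cocompact_atTop
    have h2 : Tendsto (fun X : W => δ * ‖X‖) (cocompact W) atTop :=
      (tendsto_const_mul_atTop_of_pos hδ0).2 h1
    exact tendsto_atTop_add_const_left _ _ h2
  obtain ⟨X₀, hX₀⟩ := (hfc.comp continuous_subtype_val).exists_forall_le hcoer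
  -- X₀ is a global minimum of f
  have hglobal : ∀ Z : 𝔞, f (X₀ : 𝔞) ≤ f Z := by
    intro Z
    have hdecomp : Z = (W.orthogonalProjectionOnto Z : 𝔞) + (Z - W.orthogonalProjectionOnto Z) := by
      abel
    have hperp : Z - (W.orthogonalProjectionOnto Z : 𝔞) ∈ Wᗮ :=
      W.sub_starProjection_mem_orthogonal Z
    calc f (X₀ : 𝔞) ≤ f ((W.orthogonalProjectionOnto Z : W) : 𝔞) := hX₀ _
      _ = f Z := by rw [← hinv _ _ hperp, ← hdecomp]
  -- first-order condition at the minimum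
  have hkey : ∀ Y : 𝔞, ∑ α ∈ R, b α * Real.exp ⟪α, (X₀ : 𝔞)⟫_ℝ * ⟪α, Y⟫_ℝ
      = F (X₀ : 𝔞) * ⟪p, Y⟫_ℝ := by
    intro Y
    set φ : ℝ → ℝ := fun s => f ((X₀ : 𝔞) + s • Y) with hφ
    set G : ℝ → ℝ :=
      fun s => ∑ α ∈ R, b α * Real.exp (⟪α, (X₀ : 𝔞)⟫_ℝ + s * ⟪α, Y⟫_ℝ) with hG
    have hGF : ∀ s, G s = F ((X₀ : 𝔞) + s • Y) := by
      intro s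
      refine Finset.sum_congr rfl fun α _ => ?_
      rw [inner_add_right, real_inner_smul_right]
    have hG0 : ∀ s, 0 < G s := fun s => (hGF s) ▸ hF0 _
    have hGd : ∀ s, HasDerivAt G (∑ α ∈ R, b α * ⟪α, Y⟫_ℝ *
        Real.exp (⟪α, (X₀ : 𝔞)⟫_ℝ + s * ⟪α, Y⟫_ℝ)) s := by
      intro s
      refine HasDerivAt.fun_sum fun α _ => ?_
      have h1 : HasDerivAt (fun s : ℝ => ⟪α, (X₀ : 𝔞)⟫_ℝ + s * ⟪α, Y⟫_ℝ)
          ⟪α, Y⟫_ℝ s := by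
        simpa using ((hasDerivAt_id s).mul_const ⟪α, Y⟫_ℝ).const_add ⟪α, (X₀ : 𝔞)⟫_ℝ
      have h2 := (h1.exp).const_mul (b α)
      convert h2 using 1
      · rfl
      · ring
    have hφeq : φ = fun s => Real.log (G s) - (⟪p, (X₀ : 𝔞)⟫_ℝ + s * ⟪p, Y⟫_ℝ) := by
      funext s
      rw [hφ, hf]
      simp only
      rw [hGF, inner_add_right, real_inner_smul_right]
    have hφd : HasDerivAt φ ((∑ α ∈ R, b α * ⟪α, Y⟫_ℝ *
        Real.exp (⟪α, (X₀ : 𝔞)⟫_ℝ + 0 * ⟪α, Y⟫_ℝ)) / G 0 - ⟪p, Y⟫_ℝ) 0 := by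
      rw [hφeq]
      have h3 := (hGd 0).log (ne_of_gt (hG0 0))
      have h4 : HasDerivAt (fun s : ℝ => ⟪p, (X₀ : 𝔞)⟫_ℝ + s * ⟪p, Y⟫_ℝ)
          ⟪p, Y⟫_ℝ 0 := by
        simpa using ((hasDerivAt_id 0).mul_const ⟪p, Y⟫_ℝ).const_add ⟪p, (X₀ : 𝔞)⟫_ℝ
      exact h3.sub h4
    have hminφ : IsLocalMin φ 0 := by
      refine Filter.Eventually.of_forall fun s => ?_
      have e0 : φ 0 = f (X₀ : 𝔞) := by rw [hφ]; simp
      rw [e0, hφ]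
      exact hglobal _
    have hd0 := hminφ.hasDerivAt_eq_zero hφd
    rw [sub_eq_zero, div_eq_iff (ne_of_gt (hG0 0))] at hd0
    have e1 : G 0 = F (X₀ : 𝔞) := by rw [hGF 0]; simp
    have e2 : ∀ α ∈ R, b α * ⟪α, Y⟫_ℝ * Real.exp (⟪α, (X₀ : 𝔞)⟫_ℝ + 0 * ⟪α, Y⟫_ℝ)
        = b α * Real.exp ⟪α, (X₀ : 𝔞)⟫_ℝ * ⟪α, Y⟫_ℝ := by
      intro α _
      rw [zero_mul, add_zero]
      ring
    rw [Finset.sum_congr rfl e2, e1] at hd0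
    rw [hd0]
    ring
  refine ⟨(X₀ : 𝔞), ?_⟩
  refine ext_inner_right ℝ fun Y => ?_
  rw [sum_inner, real_inner_smul_left]
  have e3 : ∀ α ∈ R, ⟪(b α * Real.exp ⟪α, (X₀ : 𝔞)⟫_ℝ) • α, Y⟫_ℝ
      = b α * Real.exp ⟪α, (X₀ : 𝔞)⟫_ℝ * ⟪α, Y⟫_ℝ := fun α _ =>
    real_inner_smul_left _ _ _
  rw [Finset.sum_congr rfl e3, hkey Y]

theorem momentMap_inner {E V : Type*} [NormedAddCommGroup E] [InnerProductSpace ℝ E]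
    [FiniteDimensional ℝ E] [NormedAddCommGroup V] [InnerProductSpace ℝ V]
    (π : E →ₗ[ℝ] V →L[ℝ] V) (v : V) (Y : E) :
    ⟪momentMap π v, Y⟫_ℝ = ⟪(π Y) v, v⟫_ℝ / ‖v‖ ^ 2 := by
  rw [momentMap, InnerProductSpace.toDual_symm_apply]
  rfl

theorem momentMap_weight_sum {𝔞 V : Type*} [NormedAddCommGroup 𝔞] [InnerProductSpace ℝ 𝔞]
    [FiniteDimensional ℝ 𝔞] [NormedAddCommGroup V] [InnerProductSpace ℝ V]
    (π : 𝔞 →ₗ[ℝ] V →L[ℝ] V) (R : Finset 𝔞) (c : 𝔞 → V) (a : 𝔞 → ℝ)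
    (hc : ∀ α ∈ R, ∀ X : 𝔞, (π X) (c α) = ⟪α, X⟫_ℝ • c α)
    (horth : ∀ α ∈ R, ∀ β ∈ R, α ≠ β → ⟪c α, c β⟫_ℝ = 0)
    (hw : (∑ α ∈ R, a α • c α) ≠ 0) :
    momentMap π (∑ α ∈ R, a α • c α) =
      (∑ α ∈ R, (a α)^2 * ‖c α‖^2)⁻¹ • ∑ α ∈ R, ((a α)^2 * ‖c α‖^2) • α := by
  set w : V := ∑ α ∈ R, a α • c α with hwdef
  set S : ℝ := ∑ α ∈ R, (a α)^2 * ‖c α‖^2 with hS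
  have hSw : ⟪w, w⟫_ℝ = S := by
    rw [hwdef, sum_inner, hS]
    refine Finset.sum_congr rfl fun α hα => ?_
    rw [inner_sum]
    rw [Finset.sum_eq_single α]
    · rw [real_inner_smul_left, real_inner_smul_right, real_inner_self_eq_norm_sq]
      ring
    · intro β hβ hne
      rw [real_inner_smul_left, real_inner_smul_right,
        horth α hα β hβ (fun h => hne (h ▸ rfl))]
      ring
    · intro h; exact absurd hα h
  have hS0 : 0 < S := by
    rw [← hSw]
    have := real_inner_self_nonneg (x := w)
    rcases this.lt_or_eq with h | h
    · exact h
    · exact absurd (inner_self_eq_zero.1 h.symm) hw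
  have hwn : ‖w‖^2 = S := by rw [← real_inner_self_eq_norm_sq, hSw]
  refine ext_inner_right ℝ fun Y => ?_
  rw [momentMap_inner, hwn]
  have hπw : (π Y) w = ∑ α ∈ R, (a α * ⟪α, Y⟫_ℝ) • c α := by
    rw [hwdef, map_sum]
    refine Finset.sum_congr rfl fun α hα => ?_
    rw [map_smul, hc α hα Y, smul_smul]
  have hnum : ⟪(π Y) w, w⟫_ℝ = ∑ α ∈ R, (a α)^2 * ‖c α‖^2 * ⟪α, Y⟫_ℝ := by
    rw [hπw, hwdef, sum_inner]
    refine Finset.sum_congr rfl fun α hα => ?_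
    rw [inner_sum, Finset.sum_eq_single α]
    · rw [real_inner_smul_left, real_inner_smul_right, real_inner_self_eq_norm_sq]
      ring
    · intro β hβ hne
      rw [real_inner_smul_left, real_inner_smul_right,
        horth α hα β hβ (fun h => hne (h ▸ rfl))]
      ring
    · intro h; exact absurd hα h
  rw [hnum, real_inner_smul_left, sum_inner]
  rw [Finset.sum_div]
  rw [Finset.mul_sum]
  refine Finset.sum_congr rfl fun α hα => ?_
  rw [real_inner_smul_left]
  field_simp

theorem sum_smul_ne_zero {𝔞 V : Type*} [NormedAddCommGroup V] [InnerProductSpace ℝ V] (R : Finset 𝔞) (c : 𝔞 → V) (a : 𝔞 → ℝ)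
    (horth : ∀ α ∈ R, ∀ β ∈ R, α ≠ β → ⟪c α, c β⟫_ℝ = 0)
    {β : 𝔞} (hβ : β ∈ R) (haβ : a β ≠ 0) (hcβ : c β ≠ 0) :
    (∑ α ∈ R, a α • c α) ≠ 0 := by
  intro h
  have h1 : ⟪∑ α ∈ R, a α • c α, c β⟫_ℝ = a β * ⟪c β, c β⟫_ℝ := by
    rw [sum_inner, Finset.sum_eq_single β]
    · rw [real_inner_smul_left]
    · intro α hα hne
      rw [real_inner_smul_left, horth α hα β hβ hne, mul_zero]
    · intro hh; exact absurd hβ hh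
  rw [h, inner_zero_left] at h1
  have h2 : ⟪c β, c β⟫_ℝ ≠ 0 := fun hh => hcβ (inner_self_eq_zero.1 hh)
  exact h2 (by
    rcases mul_eq_zero.1 h1.symm with h3 | h3
    · exact absurd h3 haβ
    · exact h3)

/-- the image of the `A`-orbit of a nonzero vector `v` under the moment
map equals the intrinsic interior of the convex hull of the set of weights related
to `v`. -/
theorem momentMap_image_orbit_eq_intrinsicInterior
    {𝔞 V : Type*} [NormedAddCommGroup 𝔞] [InnerProductSpace ℝ 𝔞] [FiniteDimensional ℝ 𝔞]
    [NormedAddCommGroup V] [InnerProductSpace ℝ V] [FiniteDimensional ℝ V]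
    (π : 𝔞 →ₗ[ℝ] V →L[ℝ] V)
    (hsa : ∀ X : 𝔞, ∀ v w : V, ⟪(π X) v, w⟫_ℝ = ⟪v, (π X) w⟫_ℝ)
    (hcomm : ∀ X Y : 𝔞, Commute (π X) (π Y))
    (ΔV : Finset 𝔞) (v : V) (hv : v ≠ 0)
    -- `c α` is the component of `v` in the weight space `V_α`:
    (c : 𝔞 → V)
    (hc : ∀ α ∈ ΔV, ∀ X : 𝔞, (π X) (c α) = ⟪α, X⟫_ℝ • c α)
    (hsum : v = ∑ α ∈ ΔV, c α) :
    (Set.range fun X : 𝔞 => momentMap π (NormedSpace.exp (π X) v)) =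
      intrinsicInterior ℝ
        (convexHull ℝ ((ΔV.filter fun α => c α ≠ 0 : Finset 𝔞) : Set 𝔞)) := by
  set R : Finset 𝔞 := ΔV.filter (fun α => c α ≠ 0) with hR
  have hRsub : ∀ α ∈ R, α ∈ ΔV := fun α hα => (Finset.mem_filter.1 hα).1
  have hRc : ∀ α ∈ R, c α ≠ 0 := fun α hα => (Finset.mem_filter.1 hα).2
  have hcR : ∀ α ∈ R, ∀ X : 𝔞, (π X) (c α) = ⟪α, X⟫_ℝ • c α :=
    fun α hα => hc α (hRsub α hα)
  -- orthogonality of the weight components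
  have horth : ∀ α ∈ ΔV, ∀ β ∈ ΔV, α ≠ β → ⟪c α, c β⟫_ℝ = 0 := by
    intro α hα β hβ hne
    have h1 : ⟪(π (α - β)) (c α), c β⟫_ℝ = ⟪α, α - β⟫_ℝ * ⟪c α, c β⟫_ℝ := by
      rw [hc α hα (α - β), real_inner_smul_left]
    have h2 : ⟪c α, (π (α - β)) (c β)⟫_ℝ = ⟪β, α - β⟫_ℝ * ⟪c α, c β⟫_ℝ := by
      rw [hc β hβ (α - β), real_inner_smul_right]
    have h3 := hsa (α - β) (c α) (c β)
    rw [h1, h2] at h3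
    have h4 : (⟪α, α - β⟫_ℝ - ⟪β, α - β⟫_ℝ) * ⟪c α, c β⟫_ℝ = 0 := by
      rw [sub_mul, h3, sub_self]
    have h5 : ⟪α, α - β⟫_ℝ - ⟪β, α - β⟫_ℝ = ⟪α - β, α - β⟫_ℝ := by
      rw [inner_sub_left]
    rw [h5] at h4
    have h6 : ⟪α - β, α - β⟫_ℝ ≠ 0 := fun hh =>
      hne (sub_eq_zero.1 (inner_self_eq_zero.1 hh))
    exact (mul_eq_zero.1 h4).resolve_left h6
  have horthR : ∀ α ∈ R, ∀ β ∈ R, α ≠ β → ⟪c α, c β⟫_ℝ = 0 :=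
    fun α hα β hβ => horth α (hRsub α hα) β (hRsub β hβ)
  -- R is nonempty
  have hRne : R.Nonempty := by
    rcases R.eq_empty_or_nonempty with h | h
    · exfalso
      apply hv
      rw [hsum]
      refine Finset.sum_eq_zero fun α hα => ?_
      by_contra hcα
      have : α ∈ R := Finset.mem_filter.2 ⟨hα, hcα⟩
      rw [h] at this
      exact absurd this (Finset.notMem_empty α)
    · exact h
  -- the orbit computation
  have hexp : ∀ X : 𝔞, NormedSpace.exp (π X) v
      = ∑ α ∈ R, Real.exp ⟪α, X⟫_ℝ • c α := by
    intro X
    rw [hsum, map_sum]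
    rw [← Finset.sum_filter_of_ne (p := fun α => c α ≠ 0)
      (f := fun α => NormedSpace.exp (π X) (c α)) ?h]
    · exact Finset.sum_congr rfl fun α hα =>
        exp_apply_eigen (π X) (c α) _ (hcR α hα X)
    case h =>
      intro α hα hne hc0
      refine hne ?_
      show NormedSpace.exp (π X) (c α) = 0
      rw [hc0]
      exact map_zero _
  have hwne : ∀ X : 𝔞, (∑ α ∈ R, Real.exp ⟪α, X⟫_ℝ • c α) ≠ 0 := by
    intro X
    obtain ⟨β, hβ⟩ := hRne
    exact sum_smul_ne_zero R c _ horthR hβ (ne_of_gt (Real.exp_pos _)) (hRc β hβ)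
  have hSpos : ∀ a : 𝔞 → ℝ, (∀ α ∈ R, a α ≠ 0) →
      0 < ∑ α ∈ R, (a α)^2 * ‖c α‖^2 := by
    intro a ha
    refine Finset.sum_pos (fun α hα => ?_) hRne
    have h1 : 0 < (a α)^2 :=
      lt_of_le_of_ne (sq_nonneg _) (Ne.symm (pow_ne_zero 2 (ha α hα)))
    have h2 : 0 < ‖c α‖^2 := pow_pos (norm_pos_iff.2 (hRc α hα)) 2
    exact mul_pos h1 h2
  apply Set.eq_of_subset_of_subset
  · -- forward inclusion
    rintro _ ⟨X, rfl⟩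
    show momentMap π (NormedSpace.exp (π X) v) ∈ _
    rw [hexp X]
    rw [momentMap_weight_sum π R c _ hcR horthR (hwne X)]
    set a : 𝔞 → ℝ := fun α => Real.exp ⟪α, X⟫_ℝ with ha
    set S : ℝ := ∑ α ∈ R, (a α)^2 * ‖c α‖^2 with hS
    have hS0 : 0 < S := hSpos a fun α _ => ne_of_gt (Real.exp_pos _)
    have hrw : S⁻¹ • ∑ α ∈ R, ((a α)^2 * ‖c α‖^2) • α
        = ∑ α ∈ R, (S⁻¹ * ((a α)^2 * ‖c α‖^2)) • α := by
      rw [Finset.smul_sum]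
      exact Finset.sum_congr rfl fun α _ => by rw [smul_smul]
    rw [hrw]
    refine pos_combo_mem_intrinsicInterior R (fun α hα => ?_) ?_
    · have h1 : 0 < (a α)^2 * ‖c α‖^2 :=
        mul_pos (lt_of_le_of_ne (sq_nonneg _)
          (Ne.symm (pow_ne_zero 2 (ne_of_gt (Real.exp_pos _)))))
          (pow_pos (norm_pos_iff.2 (hRc α hα)) 2)
      exact mul_pos (inv_pos.2 hS0) h1
    · rw [← Finset.mul_sum, ← hS, inv_mul_cancel₀ (ne_of_gt hS0)]
  · -- reverse inclusion
    intro p hp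
    obtain ⟨t, ht, ht1, htp⟩ := exists_pos_combo_of_mem_intrinsicInterior R hp
    obtain ⟨X', hX'⟩ := exists_exp_combo R hRne (fun α => ‖c α‖^2)
      (fun α hα => pow_pos (norm_pos_iff.2 (hRc α hα)) 2) p t ht ht1 htp
    refine ⟨(1/2 : ℝ) • X', ?_⟩
    show momentMap π (NormedSpace.exp (π ((1/2 : ℝ) • X')) v) = p
    rw [hexp _, momentMap_weight_sum π R c _ hcR horthR (hwne _)]
    set a : 𝔞 → ℝ := fun α => Real.exp ⟪α, (1/2 : ℝ) • X'⟫_ℝ with ha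
    have hS0 : 0 < ∑ α ∈ R, (a α)^2 * ‖c α‖^2 :=
      hSpos a fun α _ => ne_of_gt (Real.exp_pos _)
    have he : ∀ α ∈ R, (a α)^2 * ‖c α‖^2 = ‖c α‖^2 * Real.exp ⟪α, X'⟫_ℝ := by
      intro α _
      have h1 : (a α)^2 = Real.exp ⟪α, X'⟫_ℝ := by
        rw [ha]
        simp only
        rw [real_inner_smul_right, pow_two, ← Real.exp_add]
        congr 1
        ring
      rw [h1]
      ring
    have e1 : ∑ α ∈ R, ((a α)^2 * ‖c α‖^2) • α
        = ∑ α ∈ R, (‖c α‖^2 * Real.exp ⟪α, X'⟫_ℝ) • α :=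
      Finset.sum_congr rfl fun α hα => by rw [he α hα]
    have e2 : ∑ α ∈ R, (a α)^2 * ‖c α‖^2
        = ∑ α ∈ R, ‖c α‖^2 * Real.exp ⟪α, X'⟫_ℝ :=
      Finset.sum_congr rfl he
    rw [e1, e2, hX', smul_smul, inv_mul_cancel₀ (ne_of_gt (e2 ▸ hS0)), one_smul]
end

section
/- Fix a nonzero v ∈ V and define ρ : 𝔞 → ℝ by ρ(X) = ln‖exp(π(X))v‖². Then for all X, Y ∈ 𝔞, writing ṽ = exp(π(X))v: (1) the first directional derivative satisfies d/dt|_{t=0} ρ(X+tY) = 2⟨m_𝔞(exp(π(X))v), Y⟩; (2) the second directional derivative satisfies d²/dt²|_{t=0} ρ(X+tY) = (4/‖ṽ‖⁴)(‖π(Y)ṽ‖²‖ṽ‖² − ⟨π(Y)ṽ, ṽ⟩²), which is ≥ 0, with equality if and only if π(Y)v = λv for some λ ∈ ℝ. In particular ρ is convex. -/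
open scoped InnerProductSpace

set_option linter.unusedSectionVars false

section Helpers
variable {𝔞 V : Type*} [NormedAddCommGroup 𝔞] [InnerProductSpace ℝ 𝔞] [FiniteDimensional ℝ 𝔞]
    [NormedAddCommGroup V] [InnerProductSpace ℝ V] [FiniteDimensional ℝ V]
    (π : 𝔞 →ₗ[ℝ] V →L[ℝ] V)

lemma mm_inner (w : V) (Z : 𝔞) :
    ⟪momentMap π w, Z⟫_ℝ = ⟪(π Z) w, w⟫_ℝ / ‖w‖ ^ 2 := by
  simp [momentMap, InnerProductSpace.toDual_symm_apply]

lemma exp_cancel (Z : 𝔞) (w : V) :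
    (NormedSpace.exp (-(π Z))) ((NormedSpace.exp (π Z)) w) = w := by
  letI : NormedAlgebra ℚ (V →L[ℝ] V) := .restrictScalars ℚ ℝ (V →L[ℝ] V)
  have h : NormedSpace.exp (-(π Z)) * NormedSpace.exp (π Z) = 1 := by
    have h2 := NormedSpace.exp_add_of_commute
      (Commute.neg_left (Commute.refl (π Z)))
    rw [neg_add_cancel, NormedSpace.exp_zero] at h2
    exact h2.symm
  calc (NormedSpace.exp (-(π Z))) ((NormedSpace.exp (π Z)) w)
      = (NormedSpace.exp (-(π Z)) * NormedSpace.exp (π Z)) w := rfl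
    _ = w := by rw [h]; rfl

lemma exp_apply_ne (Z : 𝔞) {w : V} (hw : w ≠ 0) : (NormedSpace.exp (π Z)) w ≠ 0 := by
  intro h
  apply hw
  have := exp_cancel π Z w
  rw [h, map_zero] at this
  exact this.symm


lemma curve_key (Z W : 𝔞) (hcomm : ∀ A B : 𝔞, Commute (π A) (π B)) (w : V) (s : ℝ) :
    (NormedSpace.exp (π (Z + s • W))) w
      = (NormedSpace.exp (s • π W)) ((NormedSpace.exp (π Z)) w) := by
  letI : NormedAlgebra ℚ (V →L[ℝ] V) := .restrictScalars ℚ ℝ (V →L[ℝ] V)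
  have h0 : π (Z + s • W) = π (s • W) + π Z := by rw [map_add, add_comm]
  rw [h0, NormedSpace.exp_add_of_commute (hcomm (s • W) Z), map_smul]
  rfl

lemma curve_hasDerivAt (Z W : 𝔞) (hcomm : ∀ A B : 𝔞, Commute (π A) (π B)) (w : V) (t : ℝ) :
    HasDerivAt (fun s : ℝ => (NormedSpace.exp (π (Z + s • W))) w)
      ((π W) ((NormedSpace.exp (π (Z + t • W))) w)) t := by
  have h1 := hasDerivAt_exp_smul_const' (𝕂 := ℝ) (π W) t
  have h2 := h1.clm_apply (hasDerivAt_const t ((NormedSpace.exp (π Z)) w))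
  simp only [map_zero, add_zero] at h2
  have h3 : (fun s : ℝ => (NormedSpace.exp (s • π W)) ((NormedSpace.exp (π Z)) w))
      = fun s : ℝ => (NormedSpace.exp (π (Z + s • W))) w := by
    funext s; rw [curve_key π Z W hcomm w s]
  rw [h3] at h2
  convert h2 using 1
  rw [curve_key π Z W hcomm w t]
  rfl

lemma normsq_hasDerivAt (Z W : 𝔞) (hcomm : ∀ A B : 𝔞, Commute (π A) (π B)) (w : V) (t : ℝ) :
    HasDerivAt (fun s : ℝ => ‖(NormedSpace.exp (π (Z + s • W))) w‖ ^ 2)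
      (2 * ⟪(π W) ((NormedSpace.exp (π (Z + t • W))) w),
        (NormedSpace.exp (π (Z + t • W))) w⟫_ℝ) t := by
  have h := HasDerivAt.inner ℝ (curve_hasDerivAt π Z W hcomm w t) (curve_hasDerivAt π Z W hcomm w t)
  have h2 : (fun s : ℝ => ⟪(NormedSpace.exp (π (Z + s • W))) w,
      (NormedSpace.exp (π (Z + s • W))) w⟫_ℝ)
      = fun s : ℝ => ‖(NormedSpace.exp (π (Z + s • W))) w‖ ^ 2 := by
    funext s; rw [real_inner_self_eq_norm_sq]
  rw [h2] at h
  refine h.congr_deriv ?_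
  rw [real_inner_comm]
  ring

lemma rho_hasDerivAt (Z W : 𝔞) (hcomm : ∀ A B : 𝔞, Commute (π A) (π B)) {w : V} (hw : w ≠ 0) (t : ℝ) :
    HasDerivAt (fun s : ℝ => Real.log (‖(NormedSpace.exp (π (Z + s • W))) w‖ ^ 2))
      (2 * (⟪(π W) ((NormedSpace.exp (π (Z + t • W))) w),
        (NormedSpace.exp (π (Z + t • W))) w⟫_ℝ
        / ‖(NormedSpace.exp (π (Z + t • W))) w‖ ^ 2)) t := by
  have hne : ‖(NormedSpace.exp (π (Z + t • W))) w‖ ^ 2 ≠ 0 :=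
    pow_ne_zero 2 (norm_ne_zero_iff.mpr (exp_apply_ne π _ hw))
  have h := (normsq_hasDerivAt π Z W hcomm w t).log hne
  convert h using 1
  ring


lemma phi_hasDerivAt (Z W : 𝔞) (hcomm : ∀ A B : 𝔞, Commute (π A) (π B))
    (hsa : ∀ X : 𝔞, ∀ v w : V, ⟪(π X) v, w⟫_ℝ = ⟪v, (π X) w⟫_ℝ)
    {w : V} (hw : w ≠ 0) (t : ℝ) :
    HasDerivAt (fun s : ℝ => 2 * (⟪(π W) ((NormedSpace.exp (π (Z + s • W))) w),
        (NormedSpace.exp (π (Z + s • W))) w⟫_ℝ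
        / ‖(NormedSpace.exp (π (Z + s • W))) w‖ ^ 2))
      ((4 / ‖(NormedSpace.exp (π (Z + t • W))) w‖ ^ 4) *
        (‖(π W) ((NormedSpace.exp (π (Z + t • W))) w)‖ ^ 2
          * ‖(NormedSpace.exp (π (Z + t • W))) w‖ ^ 2
        - ⟪(π W) ((NormedSpace.exp (π (Z + t • W))) w),
            (NormedSpace.exp (π (Z + t • W))) w⟫_ℝ ^ 2)) t := by
  set u : ℝ → V := fun s => (NormedSpace.exp (π (Z + s • W))) w with hu
  have hcu : HasDerivAt u ((π W) (u t)) t := curve_hasDerivAt π Z W hcomm w t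
  have hAu : HasDerivAt (fun s => (π W) (u s)) ((π W) ((π W) (u t))) t :=
    (hasDerivAt_const t (π W)).clm_apply hcu |>.congr_deriv (by simp)
  have hN : HasDerivAt (fun s => ⟪(π W) (u s), u s⟫_ℝ)
      (2 * ‖(π W) (u t)‖ ^ 2) t := by
    have h := HasDerivAt.inner ℝ hAu hcu
    refine h.congr_deriv ?_
    rw [hsa W ((π W) (u t)) (u t), real_inner_self_eq_norm_sq]
    ring
  have hg : HasDerivAt (fun s => ‖u s‖ ^ 2) (2 * ⟪(π W) (u t), u t⟫_ℝ) t :=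
    normsq_hasDerivAt π Z W hcomm w t
  have hne : ‖u t‖ ^ 2 ≠ 0 :=
    pow_ne_zero 2 (norm_ne_zero_iff.mpr (exp_apply_ne π _ hw))
  have h := ((hN.div hg hne).const_mul (2 : ℝ))
  have hn : ‖u t‖ ≠ 0 := norm_ne_zero_iff.mpr (exp_apply_ne π _ hw)
  have hb : ∀ s : ℝ, (NormedSpace.exp (π (Z + s • W))) w = u s := fun _ => rfl
  refine h.congr_deriv ?_
  simp only [hb]
  field_simp
  ring


lemma cs_sub_nonneg (x y : V) : 0 ≤ ‖x‖ ^ 2 * ‖y‖ ^ 2 - ⟪x, y⟫_ℝ ^ 2 := by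
  have h := real_inner_mul_inner_self_le x y
  rw [real_inner_self_eq_norm_sq, real_inner_self_eq_norm_sq] at h
  nlinarith [h]

lemma bracket_eq (A : V →L[ℝ] V) {w : V} (hw : w ≠ 0) :
    ‖A w‖ ^ 2 * ‖w‖ ^ 2 - ⟪A w, w⟫_ℝ ^ 2
      = ‖A w - (⟪A w, w⟫_ℝ / ‖w‖ ^ 2) • w‖ ^ 2 * ‖w‖ ^ 2 := by
  have hn : ‖w‖ ≠ 0 := norm_ne_zero_iff.mpr hw
  rw [norm_sub_sq_real, inner_smul_right, norm_smul, mul_pow, Real.norm_eq_abs, sq_abs]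
  field_simp
  ring

end Helpers

/-- properties of `ρ(X) = ln ‖exp(π X) v‖²`: its first directional
derivative is `2⟪m(exp(π X)v), Y⟫`, its second directional derivative is
`(4/‖ṽ‖⁴)(‖π(Y)ṽ‖²‖ṽ‖² − ⟪π(Y)ṽ, ṽ⟫²) ≥ 0`, with equality iff `π(Y)v = λv`;
in particular `ρ` is convex. -/
theorem log_norm_sq_exp_orbit_derivs
    {𝔞 V : Type*} [NormedAddCommGroup 𝔞] [InnerProductSpace ℝ 𝔞] [FiniteDimensional ℝ 𝔞]
    [NormedAddCommGroup V] [InnerProductSpace ℝ V] [FiniteDimensional ℝ V]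
    (π : 𝔞 →ₗ[ℝ] V →L[ℝ] V)
    (hsa : ∀ X : 𝔞, ∀ v w : V, ⟪(π X) v, w⟫_ℝ = ⟪v, (π X) w⟫_ℝ)
    (hcomm : ∀ X Y : 𝔞, Commute (π X) (π Y))
    (v : V) (hv : v ≠ 0) (X Y : 𝔞)
    (ρ : 𝔞 → ℝ) (hρ : ρ = fun Z => Real.log (‖(NormedSpace.exp (π Z)) v‖ ^ 2))
    (vt : V) (hvt : vt = (NormedSpace.exp (π X)) v)
    (D : ℝ)
    (hD : D = (4 / ‖vt‖ ^ 4) * (‖(π Y) vt‖ ^ 2 * ‖vt‖ ^ 2 - ⟪(π Y) vt, vt⟫_ℝ ^ 2)) :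
    HasDerivAt (fun t : ℝ => ρ (X + t • Y)) (2 * ⟪momentMap π vt, Y⟫_ℝ) 0 ∧
    HasDerivAt
      (fun t : ℝ => 2 * ⟪momentMap π ((NormedSpace.exp (π (X + t • Y))) v), Y⟫_ℝ) D 0 ∧
    0 ≤ D ∧
    (D = 0 ↔ ∃ lam : ℝ, (π Y) v = lam • v) ∧
    ConvexOn ℝ Set.univ ρ := by
  subst hρ hvt hD
  letI : NormedAlgebra ℚ (V →L[ℝ] V) := .restrictScalars ℚ ℝ (V →L[ℝ] V)
  have hzero : X + (0 : ℝ) • Y = X := by simp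
  have hvt0 : (NormedSpace.exp (π X)) v ≠ 0 := exp_apply_ne π X hv
  have hce : (NormedSpace.exp (π X)) ((π Y) v) = (π Y) ((NormedSpace.exp (π X)) v) := by
    have h : Commute (NormedSpace.exp (π X)) (π Y) := (hcomm X Y).exp_left
    calc (NormedSpace.exp (π X)) ((π Y) v) = (NormedSpace.exp (π X) * π Y) v := rfl
      _ = (π Y * NormedSpace.exp (π X)) v := by rw [h.eq]
      _ = (π Y) ((NormedSpace.exp (π X)) v) := rfl
  refine ⟨?_, ?_, ?_, ?_, ?_⟩
  · -- first derivative
    have h := rho_hasDerivAt π X Y hcomm hv 0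
    convert h using 1
    rw [mm_inner, hzero]
  · -- second derivative
    have h := phi_hasDerivAt π X Y hcomm hsa hv 0
    have hfun : (fun t : ℝ => 2 * ⟪momentMap π ((NormedSpace.exp (π (X + t • Y))) v), Y⟫_ℝ)
        = fun t : ℝ => 2 * (⟪(π Y) ((NormedSpace.exp (π (X + t • Y))) v),
            (NormedSpace.exp (π (X + t • Y))) v⟫_ℝ
            / ‖(NormedSpace.exp (π (X + t • Y))) v‖ ^ 2) := by
      funext t; rw [mm_inner]
    rw [hfun]
    convert h using 2 <;> rw [hzero]
  · -- nonnegativity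
    apply mul_nonneg
    · positivity
    · exact cs_sub_nonneg _ _
  · -- equality case
    constructor
    · intro h0
      set w : V := (NormedSpace.exp (π X)) v with hw
      have hn4 : (4 : ℝ) / ‖w‖ ^ 4 ≠ 0 := by
        have : ‖w‖ ≠ 0 := norm_ne_zero_iff.mpr hvt0
        positivity
      have hb : ‖(π Y) w‖ ^ 2 * ‖w‖ ^ 2 - ⟪(π Y) w, w⟫_ℝ ^ 2 = 0 :=
        by_contra fun hne => hne (by
          have := mul_eq_zero.mp h0
          tauto)
      rw [bracket_eq (π Y) hvt0] at hb
      have hdz : (π Y) w - (⟪(π Y) w, w⟫_ℝ / ‖w‖ ^ 2) • w = 0 := by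
        have h2 : ‖(π Y) w - (⟪(π Y) w, w⟫_ℝ / ‖w‖ ^ 2) • w‖ ^ 2 = 0 := by
          have hnz : ‖w‖ ^ 2 ≠ 0 := pow_ne_zero 2 (norm_ne_zero_iff.mpr hvt0)
          exact (mul_eq_zero.mp hb).resolve_right hnz
        simpa [pow_eq_zero_iff, norm_eq_zero] using h2
      set c : ℝ := ⟪(π Y) w, w⟫_ℝ / ‖w‖ ^ 2 with hcdef
      refine ⟨c, ?_⟩
      have heq : (NormedSpace.exp (π X)) ((π Y) v) = (NormedSpace.exp (π X)) (c • v) := by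
        rw [hce, map_smul]
        rw [sub_eq_zero] at hdz
        exact hdz
      have := congrArg (fun z => (NormedSpace.exp (-(π X))) z) heq
      simpa [exp_cancel] using this
    · rintro ⟨lam, hl⟩
      have hY : (π Y) ((NormedSpace.exp (π X)) v) = lam • (NormedSpace.exp (π X)) v := by
        rw [← hce, hl, map_smul]
      rw [hY]
      have : ‖lam • (NormedSpace.exp (π X)) v‖ ^ 2 * ‖(NormedSpace.exp (π X)) v‖ ^ 2
          - ⟪lam • (NormedSpace.exp (π X)) v, (NormedSpace.exp (π X)) v⟫_ℝ ^ 2 = 0 := by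
        rw [norm_smul, real_inner_smul_left, real_inner_self_eq_norm_sq, mul_pow,
          Real.norm_eq_abs, sq_abs, mul_pow]
        ring
      rw [this, mul_zero]
  · -- convexity
    refine ⟨convex_univ, fun a _ b _ s t hs ht hst => ?_⟩
    set W : 𝔞 := b - a with hWdef
    set g : ℝ → ℝ := fun τ => Real.log (‖(NormedSpace.exp (π (a + τ • W))) v‖ ^ 2) with hgdef
    set φ : ℝ → ℝ := fun τ =>
      2 * (⟪(π W) ((NormedSpace.exp (π (a + τ • W))) v),
        (NormedSpace.exp (π (a + τ • W))) v⟫_ℝ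
        / ‖(NormedSpace.exp (π (a + τ • W))) v‖ ^ 2) with hφdef
    have gder : ∀ τ : ℝ, HasDerivAt g (φ τ) τ := fun τ => rho_hasDerivAt π a W hcomm hv τ
    have φder : ∀ τ : ℝ, HasDerivAt φ
        ((4 / ‖(NormedSpace.exp (π (a + τ • W))) v‖ ^ 4) *
          (‖(π W) ((NormedSpace.exp (π (a + τ • W))) v)‖ ^ 2
            * ‖(NormedSpace.exp (π (a + τ • W))) v‖ ^ 2
          - ⟪(π W) ((NormedSpace.exp (π (a + τ • W))) v),
              (NormedSpace.exp (π (a + τ • W))) v⟫_ℝ ^ 2)) τ :=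
      fun τ => phi_hasDerivAt π a W hcomm hsa hv τ
    have hmono : Monotone φ := by
      apply monotone_of_deriv_nonneg (fun τ => (φder τ).differentiableAt)
      intro τ
      rw [(φder τ).deriv]
      apply mul_nonneg
      · positivity
      · exact cs_sub_nonneg _ _
    have hgdiff : Differentiable ℝ g := fun τ => (gder τ).differentiableAt
    have hdg : deriv g = φ := funext fun τ => (gder τ).deriv
    have hcv : ConvexOn ℝ Set.univ g := Monotone.convexOn_univ_of_deriv hgdiff (hdg ▸ hmono)
    have key := hcv.2 (Set.mem_univ (0 : ℝ)) (Set.mem_univ (1 : ℝ)) hs ht hst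
    have h01 : s • (0 : ℝ) + t • (1 : ℝ) = t := by simp
    rw [h01] at key
    have hga : g 0 = Real.log (‖(NormedSpace.exp (π a)) v‖ ^ 2) := by
      simp only [hgdef, zero_smul, add_zero]
    have hgb : g 1 = Real.log (‖(NormedSpace.exp (π b)) v‖ ^ 2) := by
      have : a + (1 : ℝ) • W = b := by rw [one_smul, hWdef]; abel
      simp only [hgdef, this]
    have hgt : g t = Real.log (‖(NormedSpace.exp (π (s • a + t • b))) v‖ ^ 2) := by
      have hs1 : s = 1 - t := by linarith
      have : a + t • W = s • a + t • b := by
        rw [hWdef, hs1]; module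
      simp only [hgdef, this]
    rw [hga, hgb, hgt] at key
    simpa using key
end
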